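/- The formal power series f(t) = ∑_{n≥0} (−1)^n (binom(2n,n)²/16^n) t^n satisfies Θ²f + t·(Θ + 1/2)²f = 0, where Θ = t·d/dt; equivalently its coefficients satisfy (n+1)² a_{n+1} = −(n+1/2)² a_n. -/

import Mathlib

/-- The logarithmic derivative `Θ = t·d/dt` on formal power series. -/
noncomputable def thetaPS (f : PowerSeries ℚ) : PowerSeries ℚ :=
  PowerSeries.mk fun n => (n : ℚ) * PowerSeries.coeff n f

lemma central_step (n : ℕ) :
    ((n : ℚ) + 1) * (Nat.choose (2*(n+1)) (n+1) : ℚ) = 2 * (2*(n:ℚ)+1) * (Nat.choose (2*n) n : ℚ) := by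
  have h := Nat.succ_mul_centralBinom_succ n
  have h' : ((n+1) * Nat.centralBinom (n+1) : ℕ) = (2 * (2*n+1) * Nat.centralBinom n : ℕ) := h
  have := congrArg (fun x : ℕ => (x : ℚ)) h'
  push_cast [Nat.centralBinom] at this ⊢
  convert this using 2 <;> ring

lemma rec_step (n : ℕ) :
    ((n : ℚ) + 1)^2 * ((-1)^(n+1) * ((Nat.choose (2*(n+1)) (n+1) : ℚ))^2 / 16^(n+1))
        = -((n : ℚ) + 1/2)^2 * ((-1)^n * ((Nat.choose (2*n) n : ℚ))^2 / 16^n) := by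
  have h := central_step n
  have h2 : (((n:ℚ)+1) * (Nat.choose (2*(n+1)) (n+1) : ℚ))^2
      = (2 * (2*(n:ℚ)+1) * (Nat.choose (2*n) n : ℚ))^2 := by rw [h]
  rw [mul_pow, mul_pow] at h2
  rw [pow_succ (-1:ℚ), pow_succ (16:ℚ)]
  have h16 : (16:ℚ)^n ≠ 0 := by positivity
  field_simp
  linear_combination (-4) * h2

/-- The series `f = ∑ (−1)ⁿ binom(2n,n)²/16ⁿ tⁿ` satisfies `Θ²f + t·(Θ+1/2)²f = 0`;
equivalently `(n+1)² a_{n+1} = −(n+1/2)² a_n`. -/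
theorem stmt1 :
    (thetaPS (thetaPS (PowerSeries.mk fun n => (-1)^n * ((Nat.choose (2*n) n : ℚ))^2 / 16^n))
      + PowerSeries.X *
        (thetaPS (thetaPS (PowerSeries.mk fun n => (-1)^n * ((Nat.choose (2*n) n : ℚ))^2 / 16^n))
          + thetaPS (PowerSeries.mk fun n => (-1)^n * ((Nat.choose (2*n) n : ℚ))^2 / 16^n)
          + PowerSeries.C (1/4 : ℚ)
            * PowerSeries.mk fun n => (-1)^n * ((Nat.choose (2*n) n : ℚ))^2 / 16^n) = 0)
    ∧ ∀ n : ℕ, ((n : ℚ) + 1)^2 * ((-1)^(n+1) * ((Nat.choose (2*(n+1)) (n+1) : ℚ))^2 / 16^(n+1))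
        = -((n : ℚ) + 1/2)^2 * ((-1)^n * ((Nat.choose (2*n) n : ℚ))^2 / 16^n) := by
  constructor
  · ext n
    simp only [PowerSeries.coeff_succ_X_mul, map_add, PowerSeries.coeff_mk, thetaPS, map_zero,
      PowerSeries.coeff_C_mul]
    cases n with
    | zero => simp [thetaPS]
    | succ m =>
      simp only [PowerSeries.coeff_succ_X_mul, map_add, PowerSeries.coeff_mk, thetaPS,
        PowerSeries.coeff_C_mul]
      have h := rec_step m
      push_cast
      nlinarith [h]
  · exact rec_step
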